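/- Let k ≥ 2 and n ≥ 1. The graph G_{k,n} (a cyclic chain of n copies of K_{k,k} minus a vertex, linked through a single extra vertex u as described) admits an (n(k+1)+1, n)-total colouring. Hence its circular total chromatic number satisfies χ''_c(G_{k,n}) ≤ k + 1 + 1/n. -/

import Mathlib

open SimpleGraph

/-- A proper total colouring of `G` with `p` colours: vertex colours `cv`,
edge colours `ce` (symmetric on adjacent pairs); adjacent vertices, adjacent
edges and incident vertex-edge pairs get distinct colours. -/
def IsTotalColoring {V : Type*} (G : SimpleGraph V) (p : ℕ)
    (cv : V → Fin p) (ce : V → V → Fin p) : Prop :=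
  (∀ u v, G.Adj u v → ce u v = ce v u) ∧
  (∀ u v, G.Adj u v → cv u ≠ cv v) ∧
  (∀ u v w, G.Adj u v → G.Adj u w → v ≠ w → ce u v ≠ ce u w) ∧
  (∀ u v, G.Adj u v → ce u v ≠ cv u ∧ ce u v ≠ cv v)

/-- circular distance condition: `q ≤ |a - b| ≤ p - q`. -/
def circOk (p q a b : ℕ) : Prop :=
  q ≤ max a b - min a b ∧ max a b - min a b ≤ p - q

/-- A `(p,q)`-total colouring of `G`. -/
def IsCircTotalColoring {V : Type*} (G : SimpleGraph V) (p q : ℕ)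
    (cv : V → ℕ) (ce : V → V → ℕ) : Prop :=
  (∀ v, cv v < p) ∧
  (∀ u v, G.Adj u v → ce u v < p) ∧
  (∀ u v, G.Adj u v → ce u v = ce v u) ∧
  (∀ u v, G.Adj u v → circOk p q (cv u) (cv v)) ∧
  (∀ u v w, G.Adj u v → G.Adj u w → v ≠ w → circOk p q (ce u v) (ce u w)) ∧
  (∀ u v, G.Adj u v → circOk p q (ce u v) (cv u) ∧ circOk p q (ce u v) (cv v))

/-- The circular total chromatic number of `G`. -/
noncomputable def circTotalChromatic {V : Type*} (G : SimpleGraph V) : ℝ :=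
  sInf {x : ℝ | ∃ p q : ℕ, 0 < q ∧
    (∃ cv ce, IsCircTotalColoring G p q cv ce) ∧ x = (p : ℝ) / q}

/-- The chain graph `G_{k,n}`: `n` blocks, each a copy of `K_{k,k-1}` with
partite sets `Fin k` (the `X`-side) and `Fin (k-1)` (the `Y`-side); in block `i`
the designated link vertices are `x_i = (i, inl 0)` and `x'_i = (i, inl 1)`;
the extra vertex `u` is `none`, joined to `x'_1` and `x_n`, and `x_i` is joined
to `x'_{i+1}`. -/
def Gkn (k n : ℕ) : SimpleGraph (Option (Fin n × (Fin k ⊕ Fin (k - 1)))) :=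
  SimpleGraph.fromRel (fun a b =>
    (∃ (i : Fin n) (x : Fin k) (y : Fin (k - 1)),
        a = some (i, Sum.inl x) ∧ b = some (i, Sum.inr y)) ∨
    (∃ (i j : Fin n) (x x' : Fin k), (j : ℕ) = (i : ℕ) + 1 ∧ (x : ℕ) = 0 ∧ (x' : ℕ) = 1 ∧
        a = some (i, Sum.inl x) ∧ b = some (j, Sum.inl x')) ∨
    (∃ (i : Fin n) (x' : Fin k), (i : ℕ) = 0 ∧ (x' : ℕ) = 1 ∧
        a = none ∧ b = some (i, Sum.inl x')) ∨
    (∃ (i : Fin n) (x : Fin k), (i : ℕ) = n - 1 ∧ (x : ℕ) = 0 ∧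
        a = some (i, Sum.inl x) ∧ b = none))

-- auxiliary definitions and lemmas for stmt10

private def iot (a : ℕ) : ℕ := if a = 0 then 0 else a + 1

private def bcol (k n a b i : ℕ) : ℕ :=
  iot ((a + b + 1) % k) * n + i + (if (a + b + 1) % k = 0 then 0 else 1)

private def cvF (k n : ℕ) : Option (Fin n × (Fin k ⊕ Fin (k - 1))) → ℕ
  | none => 0
  | some (i, Sum.inl a) => iot (a : ℕ) * n + (i : ℕ) + 1
  | some (i, Sum.inr _) => n + (i : ℕ) + 1

private def ceF (k n : ℕ) : Option (Fin n × (Fin k ⊕ Fin (k - 1))) →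
    Option (Fin n × (Fin k ⊕ Fin (k - 1))) → ℕ
  | none, none => 0
  | none, some (_, Sum.inl a) => if (a : ℕ) = 0 then 2 * n else n
  | none, some (_, Sum.inr _) => 0
  | some (_, Sum.inl a), none => if (a : ℕ) = 0 then 2 * n else n
  | some (_, Sum.inr _), none => 0
  | some (i, Sum.inl _), some (j, Sum.inl _) => n + max (i : ℕ) (j : ℕ)
  | some (i, Sum.inl a), some (_, Sum.inr b) => bcol k n (a : ℕ) (b : ℕ) (i : ℕ)
  | some (_, Sum.inr b), some (j, Sum.inl a) => bcol k n (a : ℕ) (b : ℕ) (j : ℕ)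
  | some (_, Sum.inr _), some (_, Sum.inr _) => 0

private abbrev GRel (k n : ℕ) (a b : Option (Fin n × (Fin k ⊕ Fin (k - 1)))) : Prop :=
  (∃ (i : Fin n) (x : Fin k) (y : Fin (k - 1)),
      a = some (i, Sum.inl x) ∧ b = some (i, Sum.inr y)) ∨
  (∃ (i j : Fin n) (x x' : Fin k), (j : ℕ) = (i : ℕ) + 1 ∧ (x : ℕ) = 0 ∧ (x' : ℕ) = 1 ∧
      a = some (i, Sum.inl x) ∧ b = some (j, Sum.inl x')) ∨
  (∃ (i : Fin n) (x' : Fin k), (i : ℕ) = 0 ∧ (x' : ℕ) = 1 ∧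
      a = none ∧ b = some (i, Sum.inl x')) ∨
  (∃ (i : Fin n) (x : Fin k), (i : ℕ) = n - 1 ∧ (x : ℕ) = 0 ∧
      a = some (i, Sum.inl x) ∧ b = none)

private lemma Gkn_adj {k n : ℕ} {a b : Option (Fin n × (Fin k ⊕ Fin (k - 1)))} :
    (Gkn k n).Adj a b ↔ a ≠ b ∧ (GRel k n a b ∨ GRel k n b a) := by
  unfold Gkn
  rw [SimpleGraph.fromRel_adj]

private lemma circOk_symm {p q a b : ℕ} (h : circOk p q a b) : circOk p q b a := by
  unfold circOk at h ⊢
  omega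

private lemma grid {k n A B : ℕ} (c c' r r' : ℕ) (hk : 2 ≤ k) (hn : 1 ≤ n)
    (hA : A = c * n + r) (hB : B = c' * n + r')
    (hc : c ≤ k) (h1 : c' < c) (hr : r ≤ n) (hr' : r' ≤ n)
    (hlow : r' ≤ r ∨ c' + 2 ≤ c) (hhigh : c + 1 ≤ k ∨ 1 ≤ c' ∨ r ≤ r' + 1) :
    circOk (n * (k + 1) + 1) n A B := by
  subst hA hB
  have e : c * n = c' * n + (c - c') * n := by
    calc c * n = (c' + (c - c')) * n := by rw [Nat.add_sub_cancel' (le_of_lt h1)]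
    _ = c' * n + (c - c') * n := Nat.add_mul _ _ _
  have ep : n * (k + 1) + 1 = k * n + n + 1 := by ring
  have h2 : n ≤ (c - c') * n := Nat.le_mul_of_pos_left n (by omega)
  have h3 : (c - c') * n ≤ k * n := mul_le_mul_left (by omega) n
  unfold circOk
  refine ⟨?_, ?_⟩
  · rcases hlow with hl | hl
    · omega
    · have h7 : 2 * n ≤ (c - c') * n := mul_le_mul_left (by omega) n
      omega
  · rcases hhigh with hh | hh | hh
    · have h8 : (c - c') * n + n ≤ k * n := by
        have h9 : (c - c' + 1) * n ≤ k * n := mul_le_mul_left (by omega) n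
        calc (c - c') * n + n = (c - c' + 1) * n := by ring
        _ ≤ k * n := h9
      omega
    · have h8 : (c - c') * n + n ≤ k * n := by
        have h9 : (c - c' + 1) * n ≤ k * n := mul_le_mul_left (by omega) n
        calc (c - c') * n + n = (c - c' + 1) * n := by ring
        _ ≤ k * n := h9
      omega
    · omega

private lemma grid' {k n A B : ℕ} (c c' r : ℕ) (hk : 2 ≤ k) (hn : 1 ≤ n)
    (hA : A = c * n + r) (hB : B = c' * n + r) (hc : c ≤ k) (hc' : c' ≤ k)
    (hne : c ≠ c') (hr : r ≤ n) : circOk (n * (k + 1) + 1) n A B := by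
  rcases Nat.lt_or_ge c' c with hlt | hge
  · exact grid c c' r r hk hn hA hB hc hlt hr hr (Or.inl le_rfl) (Or.inr (Or.inr (by omega)))
  · exact circOk_symm (grid c' c r r hk hn hB hA hc' (by omega) hr hr (Or.inl le_rfl)
      (Or.inr (Or.inr (by omega))))

private lemma gridEq {k n A B : ℕ} (c r : ℕ) (hk1 : 1 ≤ k)
    (hA : A = c * n + r + n) (hB : B = c * n + r) : circOk (n * (k + 1) + 1) n A B := by
  subst hA hB
  have ep : n * (k + 1) + 1 = k * n + n + 1 := by ring
  have h2 : n ≤ k * n := Nat.le_mul_of_pos_left n (by omega)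
  unfold circOk
  refine ⟨?_, ?_⟩ <;> omega

private lemma iot_zero : iot 0 = 0 := rfl

private lemma iot_one : iot 1 = 2 := rfl

private lemma iot_pos {a : ℕ} (h : a ≠ 0) : iot a = a + 1 := by simp [iot, h]

private lemma iot_le {a k : ℕ} (hk : 2 ≤ k) (ha : a < k) : iot a ≤ k := by
  unfold iot; split <;> omega

private lemma iot_ne {c a : ℕ} (h : c ≠ a) : c + 1 ≠ iot a := by
  unfold iot; split <;> omega

private lemma bcol_eq {k n x y i : ℕ} (hk : 0 < k) :
    (bcol k n x y i = i ∧ (x + y + 1) % k = 0) ∨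
    (bcol k n x y i = ((x + y + 1) % k + 1) * n + i + 1 ∧ (x + y + 1) % k ≠ 0) := by
  by_cases h : (x + y + 1) % k = 0
  · left; exact ⟨by simp [bcol, iot, h], h⟩
  · right; exact ⟨by simp [bcol, iot, h], h⟩

private lemma class_x0 {k y : ℕ} (hk : 2 ≤ k) (hy : y < k - 1) : (0 + y + 1) % k = y + 1 := by
  rw [Nat.mod_eq_of_lt (by omega)]
  omega

private lemma class_ne {k x x' t : ℕ} (hx : x < k) (hx' : x' < k) (hne : x ≠ x') :
    (x + t) % k ≠ (x' + t) % k := by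
  intro h
  have h1 : x ≡ x' [MOD k] := Nat.ModEq.add_right_cancel' t h
  have h2 : x % k = x' % k := h1
  rw [Nat.mod_eq_of_lt hx, Nat.mod_eq_of_lt hx'] at h2
  exact hne h2

private lemma class_ne_x {k x y : ℕ} (hk : 2 ≤ k) (hx : x < k) (hy : y < k - 1) :
    (x + y + 1) % k ≠ x := by
  intro h
  rcases Nat.lt_or_ge (x + y + 1) k with h1 | h1
  · rw [Nat.mod_eq_of_lt h1] at h; omega
  · have h2 : x + y + 1 - k < k := by omega
    have h3 : (x + y + 1) % k = x + y + 1 - k := by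
      rw [Nat.mod_eq_sub_mod h1, Nat.mod_eq_of_lt h2]
    omega

private lemma bcol_lt {k n x y i : ℕ} (hk : 2 ≤ k) (hn : 1 ≤ n) (hy : y < k - 1)
    (hi : i < n) : bcol k n x y i < n * (k + 1) + 1 := by
  have ep : n * (k + 1) + 1 = k * n + n + 1 := by ring
  rcases bcol_eq (k := k) (n := n) (x := x) (y := y) (i := i) (by omega) with ⟨e, h0⟩ | ⟨e, h0⟩ <;>
    rw [e]
  · omega
  · have hc : (x + y + 1) % k < k := Nat.mod_lt _ (by omega)
    have h2 : ((x + y + 1) % k + 1) * n ≤ k * n := mul_le_mul_left (by omega) n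
    omega

private lemma bcol_pair {k n x y x2 y2 i : ℕ} (hk : 2 ≤ k) (hn : 1 ≤ n) (hi : i < n)
    (hne : (x + y + 1) % k ≠ (x2 + y2 + 1) % k) :
    circOk (n * (k + 1) + 1) n (bcol k n x y i) (bcol k n x2 y2 i) := by
  have hc1 : (x + y + 1) % k < k := Nat.mod_lt _ (by omega)
  have hc2 : (x2 + y2 + 1) % k < k := Nat.mod_lt _ (by omega)
  rcases bcol_eq (k := k) (n := n) (x := x) (y := y) (i := i) (by omega) with ⟨e1, h1⟩ | ⟨e1, h1⟩ <;>
    rcases bcol_eq (k := k) (n := n) (x := x2) (y := y2) (i := i) (by omega) with ⟨e2, h2⟩ | ⟨e2, h2⟩ <;>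
    rw [e1, e2]
  · exact absurd (h1.trans h2.symm) hne
  · exact circOk_symm (grid ((x2 + y2 + 1) % k + 1) 0 (i + 1) i hk hn (by ring) (by ring)
      (by omega) (by omega) (by omega) (by omega) (Or.inl (by omega)) (Or.inr (Or.inr (by omega))))
  · exact grid ((x + y + 1) % k + 1) 0 (i + 1) i hk hn (by ring) (by ring)
      (by omega) (by omega) (by omega) (by omega) (Or.inl (by omega)) (Or.inr (Or.inr (by omega)))
  · exact grid' ((x + y + 1) % k + 1) ((x2 + y2 + 1) % k + 1) (i + 1) hk hn (by ring) (by ring)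
      (by omega) (by omega) (by omega) (by omega)

private lemma bcol_vs_hi {k n x y i B : ℕ} (hk : 2 ≤ k) (hn : 1 ≤ n) (hy : y < k - 1)
    (hi : i < n) (hB : B = 1 * n + (i + 1)) : circOk (n * (k + 1) + 1) n (bcol k n x y i) B := by
  rcases bcol_eq (k := k) (n := n) (x := x) (y := y) (i := i) (by omega) with ⟨e, h0⟩ | ⟨e, h0⟩ <;>
    rw [e]
  · exact circOk_symm (grid 1 0 (i + 1) i hk hn hB (by ring) (by omega) (by omega) (by omega)
      (by omega) (Or.inl (by omega)) (Or.inl hk))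
  · have hc : (x + y + 1) % k < k := Nat.mod_lt _ (by omega)
    exact grid' ((x + y + 1) % k + 1) 1 (i + 1) hk hn (by ring) hB (by omega) (by omega)
      (by omega) (by omega)

private lemma bcol_vs_lo {k n x y i B : ℕ} (hk : 2 ≤ k) (hn : 1 ≤ n) (hy : y < k - 1)
    (hi : i < n) (hB : B = 1 * n + i) : circOk (n * (k + 1) + 1) n (bcol k n x y i) B := by
  rcases bcol_eq (k := k) (n := n) (x := x) (y := y) (i := i) (by omega) with ⟨e, h0⟩ | ⟨e, h0⟩ <;>
    rw [e]
  · exact circOk_symm (grid 1 0 i i hk hn hB (by ring) (by omega) (by omega) (by omega)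
      (by omega) (Or.inl le_rfl) (Or.inl hk))
  · have hc : (x + y + 1) % k < k := Nat.mod_lt _ (by omega)
    exact grid ((x + y + 1) % k + 1) 1 (i + 1) i hk hn (by ring) hB (by omega) (by omega)
      (by omega) (by omega) (Or.inl (by omega)) (Or.inr (Or.inl le_rfl))

private lemma ceF_symm (k n : ℕ) (a b : Option (Fin n × (Fin k ⊕ Fin (k - 1)))) :
    ceF k n a b = ceF k n b a := by
  rcases a with _ | ⟨i, x | y⟩ <;> rcases b with _ | ⟨j, x' | y'⟩ <;> simp only [ceF] <;> omega

private lemma nbr_none {k n : ℕ} {w : Option (Fin n × (Fin k ⊕ Fin (k - 1)))}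
    (h : GRel k n none w ∨ GRel k n w none) :
    ∃ (j : Fin n) (z : Fin k), w = some (j, Sum.inl z) ∧
      (((j : ℕ) = 0 ∧ (z : ℕ) = 1) ∨ ((j : ℕ) = n - 1 ∧ (z : ℕ) = 0)) := by
  rcases h with (⟨i,x,y,h1,h2⟩|⟨i,j,x,x',h3,h4,h5,h1,h2⟩|⟨i,x,h3,h4,h1,h2⟩|⟨i,x,h3,h4,h1,h2⟩)|
    (⟨i,x,y,h1,h2⟩|⟨i,j,x,x',h3,h4,h5,h1,h2⟩|⟨i,x,h3,h4,h1,h2⟩|⟨i,x,h3,h4,h1,h2⟩)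
  · exact absurd h1 (by simp)
  · exact absurd h1 (by simp)
  · exact ⟨i, x, h2, Or.inl ⟨h3, h4⟩⟩
  · exact absurd h1 (by simp)
  · exact absurd h2 (by simp)
  · exact absurd h2 (by simp)
  · exact absurd h2 (by simp)
  · exact ⟨i, x, h1, Or.inr ⟨h3, h4⟩⟩

private lemma nbr_inr {k n : ℕ} {i : Fin n} {y : Fin (k - 1)}
    {w : Option (Fin n × (Fin k ⊕ Fin (k - 1)))}
    (h : GRel k n (some (i, Sum.inr y)) w ∨ GRel k n w (some (i, Sum.inr y))) :
    ∃ z : Fin k, w = some (i, Sum.inl z) := by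
  rcases h with (⟨i',x,y',h1,h2⟩|⟨i',j,x,x',h3,h4,h5,h1,h2⟩|⟨i',x,h3,h4,h1,h2⟩|⟨i',x,h3,h4,h1,h2⟩)|
    (⟨i',x,y',h1,h2⟩|⟨i',j,x,x',h3,h4,h5,h1,h2⟩|⟨i',x,h3,h4,h1,h2⟩|⟨i',x,h3,h4,h1,h2⟩)
  · exact absurd h1 (by simp)
  · exact absurd h1 (by simp)
  · exact absurd h1 (by simp)
  · exact absurd h1 (by simp)
  · obtain ⟨h5, h6⟩ : i = i' ∧ y = y' := by simpa using h2
    exact ⟨x, by rw [h1, h5]⟩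
  · exact absurd h2 (by simp)
  · exact absurd h2 (by simp)
  · exact absurd h2 (by simp)

private lemma nbr_inl {k n : ℕ} {i : Fin n} {x : Fin k}
    {w : Option (Fin n × (Fin k ⊕ Fin (k - 1)))}
    (h : GRel k n (some (i, Sum.inl x)) w ∨ GRel k n w (some (i, Sum.inl x))) :
    (∃ y : Fin (k - 1), w = some (i, Sum.inr y)) ∨
    (∃ (j : Fin n) (z : Fin k), (x : ℕ) = 0 ∧ (j : ℕ) = (i : ℕ) + 1 ∧ (z : ℕ) = 1 ∧
      w = some (j, Sum.inl z)) ∨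
    (∃ (j : Fin n) (z : Fin k), (x : ℕ) = 1 ∧ (i : ℕ) = (j : ℕ) + 1 ∧ (z : ℕ) = 0 ∧
      w = some (j, Sum.inl z)) ∨
    ((i : ℕ) = 0 ∧ (x : ℕ) = 1 ∧ w = none) ∨
    ((i : ℕ) = n - 1 ∧ (x : ℕ) = 0 ∧ w = none) := by
  rcases h with (⟨i',x',y',h1,h2⟩|⟨i',j,x',x'',h3,h4,h5,h1,h2⟩|⟨i',x',h3,h4,h1,h2⟩|⟨i',x',h3,h4,h1,h2⟩)|
    (⟨i',x',y',h1,h2⟩|⟨i',j,x',x'',h3,h4,h5,h1,h2⟩|⟨i',x',h3,h4,h1,h2⟩|⟨i',x',h3,h4,h1,h2⟩)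
  · obtain ⟨h5, h6⟩ : i = i' ∧ x = x' := by simpa using h1
    subst h5
    exact Or.inl ⟨y', h2⟩
  · obtain ⟨h6, h7⟩ : i = i' ∧ x = x' := by simpa using h1
    exact Or.inr (Or.inl ⟨j, x'', by rw [h7]; exact h4, by rw [h6]; exact h3, h5, h2⟩)
  · exact absurd h1 (by simp)
  · obtain ⟨h6, h7⟩ : i = i' ∧ x = x' := by simpa using h1
    exact Or.inr (Or.inr (Or.inr (Or.inr ⟨by rw [h6]; exact h3, by rw [h7]; exact h4, h2⟩)))
  · exact absurd h2 (by simp)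
  · obtain ⟨h6, h7⟩ : i = j ∧ x = x'' := by simpa using h2
    exact Or.inr (Or.inr (Or.inl ⟨i', x', by rw [h7]; exact h5, by rw [h6]; exact h3, h4, h1⟩))
  · obtain ⟨h6, h7⟩ : i = i' ∧ x = x' := by simpa using h2
    exact Or.inr (Or.inr (Or.inr (Or.inl ⟨by rw [h6]; exact h3, by rw [h7]; exact h4, h1⟩)))
  · exact absurd h2 (by simp)

private lemma cv_rel {k n : ℕ} (hk : 2 ≤ k) (hn : 1 ≤ n)
    {a b : Option (Fin n × (Fin k ⊕ Fin (k - 1)))} (h : GRel k n a b) :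
    circOk (n * (k + 1) + 1) n (cvF k n a) (cvF k n b) := by
  rcases h with ⟨i,x,y,rfl,rfl⟩|⟨i,j,x,x',hj,hx,hx',rfl,rfl⟩|⟨i,x',hi,hx',rfl,rfl⟩|
    ⟨i,x,hi,hx,rfl,rfl⟩
  · simp only [cvF]
    have hik := i.isLt
    have hxk := x.isLt
    by_cases h0 : (x : ℕ) = 0
    · refine circOk_symm (grid 1 0 ((i : ℕ) + 1) ((i : ℕ) + 1) hk hn (by ring) ?_ (by omega)
        (by omega) (by omega) (by omega) (Or.inl le_rfl) (Or.inl hk))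
      rw [h0, iot_zero]; ring
    · exact grid ((x : ℕ) + 1) 1 ((i : ℕ) + 1) ((i : ℕ) + 1) hk hn
        (by rw [iot_pos h0]; ring) (by ring) (by omega) (by omega) (by omega) (by omega)
        (Or.inl le_rfl) (Or.inr (Or.inr (by omega)))
  · simp only [cvF]
    have hik := i.isLt
    have hjk := j.isLt
    exact circOk_symm (grid 2 0 ((j : ℕ) + 1) ((i : ℕ) + 1) hk hn (by rw [hx', iot_one]; ring)
      (by rw [hx, iot_zero]; ring) (by omega) (by omega) (by omega) (by omega)
      (Or.inl (by omega)) (Or.inr (Or.inr (by omega))))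
  · simp only [cvF]
    have hik := i.isLt
    exact circOk_symm (grid 2 0 ((i : ℕ) + 1) 0 hk hn (by rw [hx', iot_one]; ring) (by ring)
      (by omega) (by omega) (by omega) (by omega) (Or.inl (by omega)) (Or.inr (Or.inr (by omega))))
  · simp only [cvF]
    exact gridEq 0 0 (by omega) (by rw [hx, iot_zero]; omega) (by ring)

private lemma ev_rel {k n : ℕ} (hk : 2 ≤ k) (hn : 1 ≤ n)
    {a b : Option (Fin n × (Fin k ⊕ Fin (k - 1)))} (h : GRel k n a b) :
    circOk (n * (k + 1) + 1) n (ceF k n a b) (cvF k n a) ∧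
    circOk (n * (k + 1) + 1) n (ceF k n a b) (cvF k n b) := by
  rcases h with ⟨i,x,y,rfl,rfl⟩|⟨i,j,x,x',hj,hx,hx',rfl,rfl⟩|⟨i,x',hi,hx',rfl,rfl⟩|
    ⟨i,x,hi,hx,rfl,rfl⟩
  · simp only [ceF, cvF]
    have hik := i.isLt
    have hxk := x.isLt
    have hyk := y.isLt
    rcases bcol_eq (k := k) (n := n) (x := (x : ℕ)) (y := (y : ℕ)) (i := (i : ℕ)) (by omega) with
      ⟨e, h0⟩ | ⟨e, h0⟩ <;> rw [e]
    · have hx0 : (x : ℕ) ≠ 0 := by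
        intro hh
        rw [hh, class_x0 hk hyk] at h0
        omega
      constructor
      · exact circOk_symm (grid ((x : ℕ) + 1) 0 ((i : ℕ) + 1) (i : ℕ) hk hn
          (by rw [iot_pos hx0]; ring) (by ring) (by omega) (by omega) (by omega) (by omega)
          (Or.inl (by omega)) (Or.inr (Or.inr (by omega))))
      · exact circOk_symm (grid 1 0 ((i : ℕ) + 1) (i : ℕ) hk hn (by ring) (by ring) (by omega)
          (by omega) (by omega) (by omega) (Or.inl (by omega)) (Or.inl hk))
    · have hc : ((x : ℕ) + (y : ℕ) + 1) % k < k := Nat.mod_lt _ (by omega)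
      have hcx : ((x : ℕ) + (y : ℕ) + 1) % k ≠ (x : ℕ) := class_ne_x hk hxk hyk
      constructor
      · exact grid' (((x : ℕ) + (y : ℕ) + 1) % k + 1) (iot (x : ℕ)) ((i : ℕ) + 1) hk hn (by ring)
          (by ring) (by omega) (iot_le hk hxk) (iot_ne hcx) (by omega)
      · exact grid' (((x : ℕ) + (y : ℕ) + 1) % k + 1) 1 ((i : ℕ) + 1) hk hn (by ring) (by ring)
          (by omega) (by omega) (by omega) (by omega)
  · simp only [ceF, cvF]
    have hik := i.isLt
    have hjk := j.isLt
    constructor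
    · exact grid 1 0 ((i : ℕ) + 1) ((i : ℕ) + 1) hk hn (by omega) (by rw [hx, iot_zero]; ring)
        (by omega) (by omega) (by omega) (by omega) (Or.inl le_rfl) (Or.inl hk)
    · exact circOk_symm (grid 2 1 ((j : ℕ) + 1) ((i : ℕ) + 1) hk hn (by rw [hx', iot_one]; ring)
        (by omega) (by omega) (by omega) (by omega) (by omega) (Or.inl (by omega))
        (Or.inr (Or.inl le_rfl)))
  · simp only [ceF, cvF]
    have hik := i.isLt
    constructor
    · exact grid 1 0 0 0 hk hn (by rw [if_neg (by omega)]; ring) (by ring) (by omega) (by omega)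
        (by omega) (by omega) (Or.inl le_rfl) (Or.inl hk)
    · exact circOk_symm (grid 2 1 ((i : ℕ) + 1) 0 hk hn (by rw [hx', iot_one]; ring)
        (by rw [if_neg (by omega)]; ring) (by omega) (by omega) (by omega) (by omega)
        (Or.inl (by omega)) (Or.inr (Or.inl le_rfl)))
  · simp only [ceF, cvF]
    have hik := i.isLt
    constructor
    · exact grid 2 0 0 ((i : ℕ) + 1) hk hn (by rw [if_pos hx]; ring) (by rw [hx, iot_zero]; ring)
        (by omega) (by omega) (by omega) (by omega) (Or.inr (by omega)) (Or.inr (Or.inr (by omega)))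
    · exact grid 2 0 0 0 hk hn (by rw [if_pos hx]; ring) (by ring) (by omega) (by omega)
        (by omega) (by omega) (Or.inr (by omega)) (Or.inr (Or.inr (by omega)))

private lemma main_col (k n : ℕ) (hk : 2 ≤ k) (hn : 1 ≤ n) :
    IsCircTotalColoring (Gkn k n) (n * (k + 1) + 1) n (cvF k n) (ceF k n) := by
  refine ⟨?_, ?_, ?_, ?_, ?_, ?_⟩
  · -- vertex colours < p
    intro v
    have ep : n * (k + 1) + 1 = k * n + n + 1 := by ring
    rcases v with _ | ⟨i, x | y⟩ <;> simp only [cvF]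
    · omega
    · have h1 : iot (x : ℕ) * n ≤ k * n := mul_le_mul_left (iot_le hk x.isLt) n
      have hik := i.isLt
      omega
    · have h2 : n ≤ k * n := Nat.le_mul_of_pos_left n (by omega)
      have hik := i.isLt
      omega
  · -- edge colours < p
    intro a b _
    have ep : n * (k + 1) + 1 = k * n + n + 1 := by ring
    have h2 : n ≤ k * n := Nat.le_mul_of_pos_left n (by omega)
    rcases a with _ | ⟨i, x | y⟩ <;> rcases b with _ | ⟨j, x' | y'⟩ <;> simp only [ceF]
    · omega
    · split <;> omega
    · omega
    · split <;> omega
    · have hik := i.isLt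
      have hjk := j.isLt
      omega
    · exact bcol_lt hk hn y'.isLt i.isLt
    · omega
    · exact bcol_lt hk hn y.isLt j.isLt
    · omega
  · -- symmetry
    intro a b _
    exact ceF_symm k n a b
  · -- vertex-vertex
    intro a b hab
    rw [Gkn_adj] at hab
    rcases hab.2 with h | h
    · exact cv_rel hk hn h
    · exact circOk_symm (cv_rel hk hn h)
  · -- edge-edge
    intro u v w h1 h2 hvw
    rw [Gkn_adj] at h1 h2
    have hv := h1.2
    have hw := h2.2
    rcases u with _ | ⟨i, x | y⟩
    · -- u = none
      obtain ⟨jv, zv, rfl, hv'⟩ := nbr_none hv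
      obtain ⟨jw, zw, rfl, hw'⟩ := nbr_none hw
      simp only [ceF]
      rcases hv' with ⟨hv1, hv2⟩ | ⟨hv1, hv2⟩ <;> rcases hw' with ⟨hw1, hw2⟩ | ⟨hw1, hw2⟩
      · exact absurd (by rw [show jv = jw from Fin.val_injective (by omega),
          show zv = zw from Fin.val_injective (by omega)]) hvw
      · exact circOk_symm (grid 2 1 0 0 hk hn (by rw [if_pos hw2]; ring)
          (by rw [if_neg (by omega)]; ring) (by omega) (by omega) (by omega) (by omega)
          (Or.inl le_rfl) (Or.inr (Or.inl le_rfl)))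
      · exact grid 2 1 0 0 hk hn (by rw [if_pos hv2]; ring) (by rw [if_neg (by omega)]; ring)
          (by omega) (by omega) (by omega) (by omega) (Or.inl le_rfl) (Or.inr (Or.inl le_rfl))
      · exact absurd (by rw [show jv = jw from Fin.val_injective (by omega),
          show zv = zw from Fin.val_injective (by omega)]) hvw
    · -- u = some (i, inl x)
      have hik := i.isLt
      have hxk := x.isLt
      rcases nbr_inl hv with ⟨yv, rfl⟩ | ⟨jv, zv, hx0, hjv, hzv, rfl⟩ |
        ⟨jv, zv, hx1, hjv, hzv, rfl⟩ | ⟨hiv, hxv, rfl⟩ | ⟨hiv, hxv, rfl⟩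
      · -- v block edge
        rcases nbr_inl hw with ⟨yw, rfl⟩ | ⟨jw, zw, hx0', hjw, hzw, rfl⟩ |
          ⟨jw, zw, hx1', hjw, hzw, rfl⟩ | ⟨hiw, hxw, rfl⟩ | ⟨hiw, hxw, rfl⟩
        · -- B B
          simp only [ceF]
          have hyy : (yv : ℕ) ≠ (yw : ℕ) := fun hh => hvw (by rw [Fin.val_injective hh])
          have hyvk := yv.isLt
          have hywk := yw.isLt
          refine bcol_pair hk hn i.isLt ?_
          rw [show (x : ℕ) + (yv : ℕ) + 1 = (yv : ℕ) + ((x : ℕ) + 1) from by ring,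
            show (x : ℕ) + (yw : ℕ) + 1 = (yw : ℕ) + ((x : ℕ) + 1) from by ring]
          exact class_ne (by omega) (by omega) hyy
        · -- B F
          simp only [ceF]
          exact bcol_vs_hi hk hn yv.isLt i.isLt (by omega)
        · -- B G
          simp only [ceF]
          exact bcol_vs_lo hk hn yv.isLt i.isLt (by omega)
        · -- B U3
          simp only [ceF]
          exact bcol_vs_lo hk hn yv.isLt i.isLt (by rw [if_neg (by omega)]; omega)
        · -- B U4
          simp only [ceF]
          exact bcol_vs_hi hk hn yv.isLt i.isLt (by rw [if_pos hxw]; omega)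
      · -- v = F
        rcases nbr_inl hw with ⟨yw, rfl⟩ | ⟨jw, zw, hx0', hjw, hzw, rfl⟩ |
          ⟨jw, zw, hx1', hjw, hzw, rfl⟩ | ⟨hiw, hxw, rfl⟩ | ⟨hiw, hxw, rfl⟩
        · -- F B
          simp only [ceF]
          exact circOk_symm (bcol_vs_hi hk hn yw.isLt i.isLt (by omega))
        · -- F F : v = w
          exact absurd (by rw [show jv = jw from Fin.val_injective (by omega),
            show zv = zw from Fin.val_injective (by omega)]) hvw
        · exact absurd hx0 (by omega)
        · exact absurd hx0 (by omega)
        · -- F U4 : jv = i+1 with i = n-1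
          have hjvk := jv.isLt
          exact absurd hjv (by omega)
      · -- v = G
        rcases nbr_inl hw with ⟨yw, rfl⟩ | ⟨jw, zw, hx0', hjw, hzw, rfl⟩ |
          ⟨jw, zw, hx1', hjw, hzw, rfl⟩ | ⟨hiw, hxw, rfl⟩ | ⟨hiw, hxw, rfl⟩
        · -- G B
          simp only [ceF]
          exact circOk_symm (bcol_vs_lo hk hn yw.isLt i.isLt (by omega))
        · exact absurd hx1 (by omega)
        · -- G G : v = w
          exact absurd (by rw [show jv = jw from Fin.val_injective (by omega),
            show zv = zw from Fin.val_injective (by omega)]) hvw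
        · -- G U3 : i = jv+1 and i = 0
          exact absurd hjv (by omega)
        · exact absurd hx1 (by omega)
      · -- v = U3 (v = none)
        rcases nbr_inl hw with ⟨yw, rfl⟩ | ⟨jw, zw, hx0', hjw, hzw, rfl⟩ |
          ⟨jw, zw, hx1', hjw, hzw, rfl⟩ | ⟨hiw, hxw, rfl⟩ | ⟨hiw, hxw, rfl⟩
        · -- U3 B
          simp only [ceF]
          exact circOk_symm (bcol_vs_lo hk hn yw.isLt i.isLt (by rw [if_neg (by omega)]; omega))
        · exact absurd hxv (by omega)
        · exact absurd hjw (by omega)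
        · exact absurd rfl hvw
        · exact absurd hxv (by omega)
      · -- v = U4 (v = none)
        rcases nbr_inl hw with ⟨yw, rfl⟩ | ⟨jw, zw, hx0', hjw, hzw, rfl⟩ |
          ⟨jw, zw, hx1', hjw, hzw, rfl⟩ | ⟨hiw, hxw, rfl⟩ | ⟨hiw, hxw, rfl⟩
        · -- U4 B
          simp only [ceF]
          exact circOk_symm (bcol_vs_hi hk hn yw.isLt i.isLt (by rw [if_pos hxv]; omega))
        · -- U4 F
          have hjwk := jw.isLt
          exact absurd hjw (by omega)
        · exact absurd hxv (by omega)
        · exact absurd hxv (by omega)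
        · exact absurd rfl hvw
    · -- u = some (i, inr y)
      obtain ⟨zv, rfl⟩ := nbr_inr hv
      obtain ⟨zw, rfl⟩ := nbr_inr hw
      simp only [ceF]
      have hzz : (zv : ℕ) ≠ (zw : ℕ) := fun hh => hvw (by rw [Fin.val_injective hh])
      refine bcol_pair hk hn i.isLt ?_
      rw [show (zv : ℕ) + (y : ℕ) + 1 = (zv : ℕ) + ((y : ℕ) + 1) from by ring,
        show (zw : ℕ) + (y : ℕ) + 1 = (zw : ℕ) + ((y : ℕ) + 1) from by ring]
      exact class_ne zv.isLt zw.isLt hzz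
  · -- edge-vertex
    intro a b hab
    rw [Gkn_adj] at hab
    rcases hab.2 with h | h
    · exact ev_rel hk hn h
    · have hh := ev_rel hk hn h
      rw [ceF_symm k n a b]
      exact ⟨hh.2, hh.1⟩

theorem stmt10 (k n : ℕ) (hk : 2 ≤ k) (hn : 1 ≤ n) :
    (∃ cv ce, IsCircTotalColoring (Gkn k n) (n * (k + 1) + 1) n cv ce) ∧
    circTotalChromatic (Gkn k n) ≤ (k : ℝ) + 1 + 1 / n := by
  constructor
  · exact ⟨_, _, main_col k n hk hn⟩
  · have hn0 : (n : ℝ) ≠ 0 := Nat.cast_ne_zero.mpr (by omega)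
    have hmem : (k : ℝ) + 1 + 1 / n ∈ {x : ℝ | ∃ p q : ℕ, 0 < q ∧
        (∃ cv ce, IsCircTotalColoring (Gkn k n) p q cv ce) ∧ x = (p : ℝ) / q} := by
      refine ⟨n * (k + 1) + 1, n, by omega, ⟨_, _, main_col k n hk hn⟩, ?_⟩
      rw [eq_div_iff hn0]
      push_cast
      field_simp
    unfold circTotalChromatic
    exact csInf_le ⟨0, fun x hx => by
      obtain ⟨p, q, hq, _, rfl⟩ := hx
      positivity⟩ hmem
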